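/- Let B₀ be a UHF C*-algebra with unique trace τ, obtained as the inductive limit of matrix factors B_{0,n} ≅ M_{kₙ}(ℂ), represented on a separable Hilbert space H. If B₀'' is the hyperfinite II₁ factor, then for every unit vector ξ ∈ H the vector state φ = ⟨·ξ, ξ⟩ satisfies limₙ ‖(τ − φ)|_{B_{0,n}' ∩ B₀}‖ = 0. -/

import Mathlib

open scoped InnerProductSpace

namespace ErgodicEmbeddings

variable {H : Type*} [NormedAddCommGroup H] [InnerProductSpace ℂ H] [CompleteSpace H]

/-- The bounded functional on `B(H)` given by `x ↦ ⟪η, x ξ⟫`. -/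
noncomputable def vecFunc (ξ η : H) : (H →L[ℂ] H) →L[ℂ] ℂ :=
  (innerSL ℂ η).comp (ContinuousLinearMap.apply ℂ H ξ)

/-- A bounded functional on `B(H)` is *normal* if it lies in the norm closure of the
linear span of the vector functionals (i.e. it comes from a trace-class operator). -/
def IsNormalFunctional (φ : (H →L[ℂ] H) →L[ℂ] ℂ) : Prop :=
  φ ∈ closure (Submodule.span ℂ (Set.range fun p : H × H => vecFunc p.1 p.2) : Set _)

/-- A normal state. -/
def IsNormalState (φ : (H →L[ℂ] H) →L[ℂ] ℂ) : Prop :=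
  IsNormalFunctional φ ∧ φ 1 = 1 ∧ ∀ x : H →L[ℂ] H, 0 ≤ (φ (star x * x)).re ∧ (φ (star x * x)).im = 0

/-- The functional `u·φ·u* : x ↦ φ (u* x u)`. -/
noncomputable def conjFunc (u : H →L[ℂ] H) (φ : (H →L[ℂ] H) →L[ℂ] ℂ) :
    (H →L[ℂ] H) →L[ℂ] ℂ :=
  φ.comp (((ContinuousLinearMap.mul ℂ (H →L[ℂ] H)) (star u)).comp
    ((ContinuousLinearMap.mul ℂ (H →L[ℂ] H)).flip u))

/-- Norm of the restriction of a functional to a subset (over its unit ball). -/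
noncomputable def restNorm (φ : (H →L[ℂ] H) →L[ℂ] ℂ) (A : Set (H →L[ℂ] H)) : ℝ :=
  sSup {r : ℝ | ∃ x ∈ A, ‖x‖ ≤ 1 ∧ r = ‖φ x‖}

/-- A unitary element of the von Neumann algebra `M`. -/
def IsUnitaryIn (M : VonNeumannAlgebra H) (u : H →L[ℂ] H) : Prop :=
  u ∈ M ∧ star u * u = 1 ∧ u * star u = 1

/-- `y` belongs to the closure of `S` in the weak operator topology. -/
def InWOTClosure (S : Set (H →L[ℂ] H)) (y : H →L[ℂ] H) : Prop :=
  ∀ (F : Finset (H × H)) (ε : ℝ), 0 < ε →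
    ∃ z ∈ S, ∀ p ∈ F, ‖⟪p.2, (z - y) p.1⟫_ℂ‖ < ε

/-- The set of `Ad`-conjugates of `x` by unitaries of `M`. -/
def unitaryConjugates (M : VonNeumannAlgebra H) (x : H →L[ℂ] H) : Set (H →L[ℂ] H) :=
  {z | ∃ u : H →L[ℂ] H, IsUnitaryIn M u ∧ z = u * x * star u}

/-- The inclusion `M ⊆ 𝓜` is *MV-ergodic* if for every `x ∈ 𝓜` the weak closure of the
convex hull of the unitary conjugates of `x` by unitaries of `M` contains a scalar. -/
def MVErgodic (M 𝓜 : VonNeumannAlgebra H) : Prop :=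
  ∀ x ∈ 𝓜, ∃ c : ℂ, InWOTClosure (convexHull ℝ (unitaryConjugates M x)) (c • (1 : H →L[ℂ] H))

/-- `M` is a factor: its center consists of the scalars. -/
def IsFactor (M : VonNeumannAlgebra H) : Prop :=
  ∀ x ∈ M, x ∈ M.commutant → ∃ c : ℂ, x = c • (1 : H →L[ℂ] H)

/-- Orthogonal projection onto the closure of `{a ξ | a ∈ S}`'s linear span. -/
noncomputable def cycProj (S : Set (H →L[ℂ] H)) (ξ : H) : H →L[ℂ] H :=
  haveI : CompleteSpace (Submodule.span ℂ ((fun a : H →L[ℂ] H => a ξ) '' S)).topologicalClosure :=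
    (Submodule.span ℂ ((fun a : H →L[ℂ] H => a ξ) '' S)).isClosed_topologicalClosure.completeSpace_coe
  (Submodule.span ℂ ((fun a : H →L[ℂ] H => a ξ) '' S)).topologicalClosure.subtypeL.comp
    (Submodule.orthogonalProjection (Submodule.span ℂ ((fun a : H →L[ℂ] H => a ξ) '' S)).topologicalClosure)

/-- The von Neumann algebra generated by a self-adjoint unital set: its double commutant. -/
def vnGen (S : Set (H →L[ℂ] H)) : Set (H →L[ℂ] H) :=
  Set.centralizer (Set.centralizer S)


private lemma vecFunc_apply (ξ η : H) (y : H →L[ℂ] H) : vecFunc ξ η y = ⟪η, y ξ⟫_ℂ := rfl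

private lemma exists_ulim (U : Ultrafilter ℕ) (g : ℕ → ℂ) {C : ℝ} (hg : ∀ n, ‖g n‖ ≤ C) :
    ∃ z : ℂ, Filter.Tendsto g (U : Filter ℕ) (nhds z) := by
  have hK : IsCompact (Metric.closedBall (0 : ℂ) C) := isCompact_closedBall _ _
  have hle : ↑(U.map g) ≤ Filter.principal (Metric.closedBall (0 : ℂ) C) := by
    rw [Filter.le_principal_iff]
    refine Filter.mem_map.2 (Filter.univ_mem' fun n => ?_)
    simpa [Metric.mem_closedBall, dist_zero_right] using hg n
  obtain ⟨z, _, hz⟩ := hK.ultrafilter_le_nhds (U.map g) hle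
  exact ⟨z, hz⟩

/-- Lemma 6.1, 1° ⇒ 2°. -/
theorem uhf_vector_states_asymptotically_tracial
    {H : Type*} [NormedAddCommGroup H] [InnerProductSpace ℂ H] [CompleteSpace H]
    [SecondCountableTopology H]
    -- an increasing sequence of matrix factors:
    (B : ℕ → StarSubalgebra ℂ (H →L[ℂ] H)) (hBmono : Monotone B)
    (hBfin : ∀ n, FiniteDimensional ℂ (Submodule.span ℂ (B n : Set (H →L[ℂ] H))))
    (hBfactor : ∀ n, ∀ x ∈ B n, (∀ y ∈ B n, x * y = y * x) →
      ∃ c : ℂ, x = c • (1 : H →L[ℂ] H))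
    -- the UHF algebra `B₀` is the norm closure of the union, with unique trace `τ`:
    (τ : (H →L[ℂ] H) →L[ℂ] ℂ) (hτ1 : τ 1 = 1)
    (hτtrace : ∀ x ∈ closure (⋃ n, (B n : Set (H →L[ℂ] H))),
      ∀ y ∈ closure (⋃ n, (B n : Set (H →L[ℂ] H))), τ (x * y) = τ (y * x))
    (hτpos : ∀ x, 0 ≤ (τ (star x * x)).re ∧ (τ (star x * x)).im = 0)
    (hτnormal : IsNormalFunctional τ)
    -- `B₀'' = vnGen B₀` is a II₁ factor (with normal faithful trace extending `τ`):
    (R : VonNeumannAlgebra H)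
    (hR : (R : Set (H →L[ℂ] H)) = vnGen (closure (⋃ n, (B n : Set (H →L[ℂ] H)))))
    (hRfactor : IsFactor R)
    (hRinfdim : ¬ FiniteDimensional ℂ (Submodule.span ℂ (R : Set (H →L[ℂ] H))))
    (hRtrace : ∀ x ∈ R, ∀ y ∈ R, τ (x * y) = τ (y * x))
    (hRfaithful : ∀ x ∈ R, τ (star x * x) = 0 → x = 0) :
    ∀ ξ : H, ‖ξ‖ = 1 →
      Filter.Tendsto (fun n => restNorm (τ - vecFunc ξ ξ)
          (Set.centralizer (B n : Set (H →L[ℂ] H)) ∩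
            closure (⋃ m, (B m : Set (H →L[ℂ] H)))))
        Filter.atTop (nhds 0) := by
  classical
  intro ξ hξ
  set ψ : (H →L[ℂ] H) →L[ℂ] ℂ := τ - vecFunc ξ ξ with hψdef
  set B₀c : Set (H →L[ℂ] H) := closure (⋃ m, (B m : Set (H →L[ℂ] H))) with hB₀c
  let A : ℕ → Set (H →L[ℂ] H) := fun n =>
    Set.centralizer (B n : Set (H →L[ℂ] H)) ∩ B₀c
  show Filter.Tendsto (fun n => restNorm ψ (A n)) Filter.atTop (nhds 0)
  let S : ℕ → Set ℝ := fun n => {r : ℝ | ∃ x ∈ A n, ‖x‖ ≤ 1 ∧ r = ‖ψ x‖}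
  have hrest : ∀ n, restNorm ψ (A n) = sSup (S n) := fun n => rfl
  have h0B : (0 : H →L[ℂ] H) ∈ B₀c :=
    subset_closure (Set.mem_iUnion.2 ⟨0, (B 0).zero_mem⟩)
  have h0A : ∀ n, (0 : H →L[ℂ] H) ∈ A n := fun n => ⟨fun m _ => by simp, h0B⟩
  have h0S : ∀ n, (0 : ℝ) ∈ S n := fun n => ⟨0, h0A n, by simp, by simp⟩
  have hSne : ∀ n, (S n).Nonempty := fun n => ⟨0, h0S n⟩
  have hSbdd : ∀ n, BddAbove (S n) := by
    intro n
    refine ⟨‖ψ‖, ?_⟩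
    rintro r ⟨y, hy, hy1, rfl⟩
    calc ‖ψ y‖ ≤ ‖ψ‖ * ‖y‖ := ψ.le_opNorm y
      _ ≤ ‖ψ‖ * 1 := mul_le_mul_of_nonneg_left hy1 (norm_nonneg _)
      _ = ‖ψ‖ := mul_one _
  have hAanti : Antitone A := by
    intro m n hmn
    exact Set.inter_subset_inter_left _
      (Set.centralizer_subset (SetLike.coe_subset_coe.2 (hBmono hmn)))
  have hFanti : ∀ {m n : ℕ}, m ≤ n → restNorm ψ (A n) ≤ restNorm ψ (A m) := by
    intro m n hmn
    rw [hrest, hrest]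
    refine csSup_le_csSup (hSbdd m) (hSne n) ?_
    rintro r ⟨y, hy, h1, rfl⟩
    exact ⟨y, hAanti hmn hy, h1, rfl⟩
  have hFnonneg : ∀ n, 0 ≤ restNorm ψ (A n) := fun n => le_csSup (hSbdd n) (h0S n)
  have hmain : ∀ ε : ℝ, 0 < ε → ∃ N, ∀ n ≥ N, restNorm ψ (A n) < ε := by
    by_contra hcon
    push_neg at hcon
    obtain ⟨ε, hε, hεall⟩ := hcon
    have hεall' : ∀ n, ε ≤ restNorm ψ (A n) := by
      intro n
      obtain ⟨m, hm, hm2⟩ := hεall n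
      exact hm2.trans (hFanti hm)
    have hex : ∀ n, ∃ y, y ∈ A n ∧ ‖y‖ ≤ 1 ∧ ε / 2 < ‖ψ y‖ := by
      intro n
      have hlt : ε / 2 < sSup (S n) :=
        lt_of_lt_of_le (half_lt_self hε) ((hεall' n).trans (hrest n).le)
      obtain ⟨r, ⟨y, hy, h1, rfl⟩, hr⟩ := exists_lt_of_lt_csSup (hSne n) hlt
      exact ⟨y, hy, h1, hr⟩
    choose x hxA hx1 hxψ using hex
    set U : Ultrafilter ℕ := Ultrafilter.of Filter.atTop with hU
    have hUle : (U : Filter ℕ) ≤ Filter.atTop := Ultrafilter.of_le _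
    have hbound : ∀ (η ζ : H) (n : ℕ), ‖⟪η, (x n) ζ⟫_ℂ‖ ≤ ‖η‖ * ‖ζ‖ := by
      intro η ζ n
      calc ‖⟪η, (x n) ζ⟫_ℂ‖ ≤ ‖η‖ * ‖(x n) ζ‖ := norm_inner_le_norm _ _
        _ ≤ ‖η‖ * (‖x n‖ * ‖ζ‖) :=
            mul_le_mul_of_nonneg_left ((x n).le_opNorm ζ) (norm_nonneg _)
        _ ≤ ‖η‖ * (1 * ‖ζ‖) := by
            have := mul_le_mul_of_nonneg_right (hx1 n) (norm_nonneg ζ)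
            exact mul_le_mul_of_nonneg_left this (norm_nonneg _)
        _ = ‖η‖ * ‖ζ‖ := by ring
    have hlimex : ∀ η ζ : H,
        ∃ z : ℂ, Filter.Tendsto (fun n => ⟪η, (x n) ζ⟫_ℂ) (U : Filter ℕ) (nhds z) :=
      fun η ζ => exists_ulim U _ (hbound η ζ)
    choose lim2 hlim2 using hlimex
    have hlim2norm : ∀ η ζ, ‖lim2 η ζ‖ ≤ ‖η‖ * ‖ζ‖ := fun η ζ =>
      le_of_tendsto ((hlim2 η ζ).norm) (Filter.Eventually.of_forall (hbound η ζ))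
    have hT2 : ∀ (c : ℂ) η ζ, lim2 (c • η) ζ = (starRingEnd ℂ) c * lim2 η ζ := by
      intro c η ζ
      refine tendsto_nhds_unique (hlim2 _ _) ?_
      refine (((hlim2 η ζ).const_mul ((starRingEnd ℂ) c))).congr fun n => ?_
      rw [inner_smul_left]
    have hT3 : ∀ η η' ζ, lim2 (η + η') ζ = lim2 η ζ + lim2 η' ζ := by
      intro η η' ζ
      refine tendsto_nhds_unique (hlim2 _ _) ?_
      refine ((hlim2 η ζ).add (hlim2 η' ζ)).congr fun n => ?_
      rw [inner_add_left]
    have hT4 : ∀ η (c : ℂ) ζ, lim2 η (c • ζ) = c * lim2 η ζ := by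
      intro η c ζ
      refine tendsto_nhds_unique (hlim2 _ _) ?_
      refine (((hlim2 η ζ).const_mul c)).congr fun n => ?_
      rw [map_smul, inner_smul_right]
    have hT5 : ∀ η ζ ζ', lim2 η (ζ + ζ') = lim2 η ζ + lim2 η ζ' := by
      intro η ζ ζ'
      refine tendsto_nhds_unique (hlim2 _ _) ?_
      refine ((hlim2 η ζ).add (hlim2 η ζ')).congr fun n => ?_
      rw [map_add, inner_add_right]
    have hfun : ∀ ζ : H, ∃ w : H, ∀ η, ⟪η, w⟫_ℂ = lim2 η ζ := by
      intro ζ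
      let f₀ : H →ₗ[ℂ] ℂ :=
        { toFun := fun η => (starRingEnd ℂ) (lim2 η ζ)
          map_add' := fun η η' => by
            show (starRingEnd ℂ) (lim2 (η + η') ζ) =
              (starRingEnd ℂ) (lim2 η ζ) + (starRingEnd ℂ) (lim2 η' ζ)
            rw [hT3]; exact map_add _ _ _
          map_smul' := fun c η => by
            show (starRingEnd ℂ) (lim2 (c • η) ζ) = c • (starRingEnd ℂ) (lim2 η ζ)
            rw [hT2, map_mul, Complex.conj_conj]
            rfl }
      let f : H →L[ℂ] ℂ := f₀.mkContinuous ‖ζ‖ (fun η => by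
        show ‖(starRingEnd ℂ) (lim2 η ζ)‖ ≤ ‖ζ‖ * ‖η‖
        rw [RCLike.norm_conj]
        exact (hlim2norm η ζ).trans (le_of_eq (mul_comm _ _)))
      refine ⟨(InnerProductSpace.toDual ℂ H).symm f, fun η => ?_⟩
      have h1 : ⟪(InnerProductSpace.toDual ℂ H).symm f, η⟫_ℂ = f η :=
        InnerProductSpace.toDual_symm_apply
      have h2 := congrArg (starRingEnd ℂ) h1
      rw [inner_conj_symm] at h2
      rw [h2]
      show (starRingEnd ℂ) ((starRingEnd ℂ) (lim2 η ζ)) = lim2 η ζ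
      exact Complex.conj_conj _
    choose Tv hTv using hfun
    have hTvnorm : ∀ ζ, ‖Tv ζ‖ ≤ ‖ζ‖ := by
      intro ζ
      rcases eq_or_lt_of_le (norm_nonneg (Tv ζ)) with h0 | h0
      · rw [← h0]; exact norm_nonneg ζ
      · have h1 : ‖Tv ζ‖ * ‖Tv ζ‖ ≤ ‖Tv ζ‖ * ‖ζ‖ := by
          have h2 : ⟪Tv ζ, Tv ζ⟫_ℂ = lim2 (Tv ζ) ζ := hTv ζ (Tv ζ)
          have h3 : ‖⟪Tv ζ, Tv ζ⟫_ℂ‖ = ‖Tv ζ‖ * ‖Tv ζ‖ := by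
            rw [inner_self_eq_norm_sq_to_K]
            simp [sq]
          rw [← h3, h2]
          exact hlim2norm _ _
        exact le_of_mul_le_mul_left h1 h0
    have hTvadd : ∀ ζ ζ', Tv (ζ + ζ') = Tv ζ + Tv ζ' := by
      intro ζ ζ'
      refine ext_inner_left ℂ fun η => ?_
      rw [hTv, inner_add_right, hTv, hTv, hT5]
    have hTvsmul : ∀ (c : ℂ) ζ, Tv (c • ζ) = c • Tv ζ := by
      intro c ζ
      refine ext_inner_left ℂ fun η => ?_
      rw [hTv, inner_smul_right, hTv, hT4]
    let T : H →L[ℂ] H := LinearMap.mkContinuous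
      { toFun := Tv
        map_add' := hTvadd
        map_smul' := fun c ζ => by
          show Tv (c • ζ) = (RingHom.id ℂ) c • Tv ζ
          rw [RingHom.id_apply, hTvsmul] } 1
      (fun ζ => by show ‖Tv ζ‖ ≤ 1 * ‖ζ‖; rw [one_mul]; exact hTvnorm ζ)
    have hT : ∀ η ζ, ⟪η, T ζ⟫_ℂ = lim2 η ζ := fun η ζ => hTv ζ η
    have hTnorm : ‖T‖ ≤ 1 := LinearMap.mkContinuous_norm_le _ zero_le_one _
    have hcommT : ∀ a : H →L[ℂ] H,
        (∀ᶠ n in (U : Filter ℕ), a * x n = x n * a) → a * T = T * a := by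
      intro a ha
      ext ζ
      refine ext_inner_left ℂ fun η => ?_
      have heq : ∀ᶠ n in (U : Filter ℕ),
          ⟪ContinuousLinearMap.adjoint a η, (x n) ζ⟫_ℂ = ⟪η, (x n) (a ζ)⟫_ℂ := by
        filter_upwards [ha] with n hn
        rw [ContinuousLinearMap.adjoint_inner_left]
        have h5 : a ((x n) ζ) = (x n) (a ζ) := by
          have h6 := congrArg (fun z : H →L[ℂ] H => z ζ) hn
          simpa [ContinuousLinearMap.mul_apply] using h6
        rw [h5]
      have hkey : lim2 (ContinuousLinearMap.adjoint a η) ζ = lim2 η (a ζ) :=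
        tendsto_nhds_unique ((hlim2 _ _).congr' heq) (hlim2 _ _)
      calc ⟪η, (a * T) ζ⟫_ℂ = ⟪η, a (T ζ)⟫_ℂ := rfl
        _ = ⟪ContinuousLinearMap.adjoint a η, T ζ⟫_ℂ :=
            (ContinuousLinearMap.adjoint_inner_left a (T ζ) η).symm
        _ = lim2 (ContinuousLinearMap.adjoint a η) ζ := hT _ _
        _ = lim2 η (a ζ) := hkey
        _ = ⟪η, T (a ζ)⟫_ℂ := (hT _ _).symm
        _ = ⟪η, (T * a) ζ⟫_ℂ := rfl
    have hcomm_union : ∀ a ∈ ⋃ m, (B m : Set (H →L[ℂ] H)), a * T = T * a := by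
      intro a ha
      obtain ⟨m, hm⟩ := Set.mem_iUnion.1 ha
      refine hcommT a (Filter.Eventually.filter_mono hUle ?_)
      refine Filter.eventually_atTop.2 ⟨m, fun n hn => ?_⟩
      exact (hxA n).1 a (SetLike.coe_subset_coe.2 (hBmono hn) hm)
    have hTcent : T ∈ Set.centralizer B₀c := by
      rw [Set.mem_centralizer_iff]
      have hclosed : IsClosed {a : H →L[ℂ] H | a * T = T * a} :=
        isClosed_eq (continuous_id.mul continuous_const) (continuous_const.mul continuous_id)
      exact fun a ha => closure_minimal hcomm_union hclosed ha
    have hTR : T ∈ R := by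
      rw [← SetLike.mem_coe, hR]
      rw [vnGen, Set.mem_centralizer_iff]
      intro z hz
      exact hcommT z (Filter.Eventually.of_forall fun n => (hz (x n) (hxA n).2).symm)
    have hTcomm : T ∈ R.commutant := by
      rw [VonNeumannAlgebra.mem_commutant_iff]
      intro g hg
      have hg' : g ∈ vnGen B₀c := by rw [← hR]; exact hg
      exact (Set.mem_centralizer_iff.1 hg' T hTcent).symm
    obtain ⟨c, hc⟩ := hRfactor T hTR hTcomm
    have hφlim : Filter.Tendsto (fun n => (vecFunc ξ ξ) (x n)) (U : Filter ℕ)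
        (nhds ((vecFunc ξ ξ) T)) := by
      have e : (vecFunc ξ ξ) T = lim2 ξ ξ := hT ξ ξ
      rw [e]
      exact hlim2 ξ ξ
    have hglim : ∀ g ∈ Submodule.span ℂ (Set.range fun p : H × H => vecFunc p.1 p.2),
        Filter.Tendsto (fun n => g (x n)) (U : Filter ℕ) (nhds (g T)) := by
      intro g hg
      induction hg using Submodule.span_induction with
      | mem g hgm =>
          obtain ⟨p, rfl⟩ := hgm
          have e : (vecFunc p.1 p.2) T = lim2 p.2 p.1 := hT p.2 p.1
          rw [e]
          exact hlim2 p.2 p.1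
      | zero => simpa using (tendsto_const_nhds : Filter.Tendsto (fun _ : ℕ => (0:ℂ)) _ _)
      | add g g' _ _ hgl hgl' =>
          simpa [ContinuousLinearMap.add_apply] using hgl.add hgl'
      | smul c' g _ hgl =>
          simpa [ContinuousLinearMap.smul_apply] using hgl.const_smul c'
    have hτlim : Filter.Tendsto (fun n => τ (x n)) (U : Filter ℕ) (nhds (τ T)) := by
      rw [Metric.tendsto_nhds]
      intro ε' hε'
      obtain ⟨g, hgmem, hgd⟩ := Metric.mem_closure_iff.1 hτnormal (ε' / 3) (by linarith)
      have hτg : ‖τ - g‖ < ε' / 3 := by rwa [dist_eq_norm] at hgd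
      have hτgpos : (0:ℝ) ≤ ‖τ - g‖ := norm_nonneg _
      have hgt := Metric.tendsto_nhds.1 (hglim g (SetLike.mem_coe.1 hgmem)) (ε' / 3) (by linarith)
      filter_upwards [hgt] with n hn
      have b1 : dist (τ (x n)) (g (x n)) < ε' / 3 := by
        rw [dist_eq_norm]
        have e1 : τ (x n) - g (x n) = (τ - g) (x n) := by
          simp [ContinuousLinearMap.sub_apply]
        rw [e1]
        calc ‖(τ - g) (x n)‖ ≤ ‖τ - g‖ * ‖x n‖ := (τ - g).le_opNorm _
          _ ≤ ‖τ - g‖ * 1 := mul_le_mul_of_nonneg_left (hx1 n) hτgpos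
          _ < ε' / 3 := by rw [mul_one]; exact hτg
      have b3 : dist (g T) (τ T) < ε' / 3 := by
        rw [dist_eq_norm]
        have e1 : g T - τ T = -((τ - g) T) := by
          simp [ContinuousLinearMap.sub_apply]
        rw [e1, norm_neg]
        calc ‖(τ - g) T‖ ≤ ‖τ - g‖ * ‖T‖ := (τ - g).le_opNorm _
          _ ≤ ‖τ - g‖ * 1 := mul_le_mul_of_nonneg_left hTnorm hτgpos
          _ < ε' / 3 := by rw [mul_one]; exact hτg
      calc dist (τ (x n)) (τ T)
          ≤ dist (τ (x n)) (g (x n)) + dist (g (x n)) (g T) + dist (g T) (τ T) :=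
            dist_triangle4 _ _ _ _
        _ < ε' / 3 + ε' / 3 + ε' / 3 := by
            have := hn
            linarith [b1, b3, hn]
        _ = ε' := by ring
    have hψT : ψ T = 0 := by
      have h1 : τ T = c := by rw [hc, map_smul, hτ1, smul_eq_mul, mul_one]
      have h2 : (vecFunc ξ ξ) T = c := by
        rw [hc, vecFunc_apply]
        rw [ContinuousLinearMap.smul_apply, ContinuousLinearMap.one_apply,
          inner_smul_right, inner_self_eq_norm_sq_to_K, hξ]
        norm_num
      rw [hψdef]
      simp [ContinuousLinearMap.sub_apply, h1, h2]
    have hψlim : Filter.Tendsto (fun n => ψ (x n)) (U : Filter ℕ) (nhds 0) := by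
      rw [← hψT, hψdef]
      refine (hτlim.sub hφlim).congr fun n => ?_
      simp [ContinuousLinearMap.sub_apply]
    have hcontr : ε / 2 ≤ 0 := by
      have hnt : Filter.Tendsto (fun n => ‖ψ (x n)‖) (U : Filter ℕ) (nhds 0) := by
        simpa using hψlim.norm
      exact ge_of_tendsto hnt (Filter.Eventually.of_forall fun n => (hxψ n).le)
    linarith
  rw [Metric.tendsto_atTop]
  intro ε hε
  obtain ⟨N, hN⟩ := hmain ε hε
  refine ⟨N, fun n hn => ?_⟩
  rw [Real.dist_eq, sub_zero, abs_of_nonneg (hFnonneg n)]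
  exact hN n hn


end ErgodicEmbeddings
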